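/- Let λ be a composition of d into n nonnegative parts, and let i, j ∈ {1,…,n−1} with |i−j| = 1. Writing E_i := E_i^{(1)}, the identity E_i ∘ E_j ∘ E_i = E_i^{(2)} ∘ E_j + E_j ∘ E_i^{(2)} holds as ℂ-linear maps M^λ → M^{λ+2α_i+α_j}, and likewise with F in place of E throughout. -/

import Mathlib

section helpers
variable {α M : Type*} [DecidableEq α] [AddCommMonoid M]

lemma sum_pc1 (s : Finset α) (f : Finset α → M) :
    ∑ R ∈ s.powersetCard 1, f R = ∑ a ∈ s, f {a} := by
  rw [Finset.powersetCard_one, Finset.sum_map]; rfl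

lemma pair_sum' (X : Finset α) (h : α → α → M) :
    ∑ a ∈ X, ∑ c ∈ X.erase a, h a c
      = ∑ R ∈ X.powersetCard 2, ∑ a ∈ R, ∑ c ∈ R.erase a, h a c := by
  induction X using Finset.induction with
  | empty =>
    have : Finset.powersetCard 2 (∅ : Finset α) = ∅ := by
      rw [Finset.powersetCard_eq_empty]; simp
    simp [this]
  | @insert x X hx ih =>
    have hdisj : Disjoint (X.powersetCard 2) ((X.powersetCard 1).image (insert x)) := by
      rw [Finset.disjoint_left]
      intro R hR hR'
      obtain ⟨S, hS, rfl⟩ := Finset.mem_image.mp hR'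
      exact hx ((Finset.mem_powersetCard.mp hR).1 (Finset.mem_insert_self x S))
    have hinj : ∀ S ∈ X.powersetCard 1, ∀ S' ∈ X.powersetCard 1,
        insert x S = insert x S' → S = S' := by
      intro S hS S' hS' hE
      have h1 : x ∉ S := fun hc => hx ((Finset.mem_powersetCard.mp hS).1 hc)
      have h2 : x ∉ S' := fun hc => hx ((Finset.mem_powersetCard.mp hS').1 hc)
      rw [← Finset.erase_insert h1, ← Finset.erase_insert h2, hE]
    rw [Finset.sum_insert hx, Finset.erase_insert hx,
      show (2 : ℕ) = 1 + 1 from rfl, Finset.powersetCard_succ_insert hx,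
      Finset.sum_union hdisj, Finset.sum_image hinj, sum_pc1]
    have hterm : ∀ a ∈ X, (∑ b ∈ insert x ({a} : Finset α),
        ∑ c ∈ (insert x ({a} : Finset α)).erase b, h b c) = h x a + h a x := by
      intro a ha
      have hxa : x ≠ a := fun hc => hx (hc ▸ ha)
      have hea : ({x, a} : Finset α).erase a = {x} := by
        rw [Finset.pair_comm, Finset.erase_insert (by simp [hxa.symm])]
      rw [Finset.sum_insert (by simp [hxa]), Finset.erase_insert (by simp [hxa]),
        Finset.sum_singleton, Finset.sum_singleton, hea, Finset.sum_singleton]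
    rw [Finset.sum_congr rfl hterm]
    have hrest : ∀ a ∈ X, (∑ c ∈ (insert x X).erase a, h a c)
        = h a x + ∑ c ∈ X.erase a, h a c := by
      intro a ha
      have hxa : x ≠ a := fun hc => hx (hc ▸ ha)
      rw [Finset.erase_insert_of_ne hxa, Finset.sum_insert (by simp [hx])]
    rw [Finset.sum_congr rfl hrest, ← ih]
    rw [Finset.sum_add_distrib, Finset.sum_add_distrib]
    abel

lemma pair_eq {R : Finset α} (hR : R.card = 2) {a c : α} (ha : a ∈ R) (hc : c ∈ R.erase a) :
    ({a, c} : Finset α) = R := by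
  have hc' := Finset.mem_of_mem_erase hc
  have hca : c ≠ a := Finset.ne_of_mem_erase hc
  apply Finset.eq_of_subset_of_card_le
  · intro x hxm
    rcases Finset.mem_insert.mp hxm with rfl | hxs
    · exact ha
    · exact Finset.mem_singleton.mp hxs ▸ hc'
  · rw [hR, Finset.card_insert_of_notMem (by simp [hca.symm]), Finset.card_singleton]

lemma pair_sum'' (X : Finset α) (f : Finset α → M) :
    ∑ a ∈ X, ∑ c ∈ X.erase a, f {a, c} = ∑ R ∈ X.powersetCard 2, (f R + f R) := by
  rw [pair_sum']
  refine Finset.sum_congr rfl fun R hR => ?_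
  have hR2 : R.card = 2 := (Finset.mem_powersetCard.mp hR).2
  calc ∑ a ∈ R, ∑ c ∈ R.erase a, f {a, c} = ∑ a ∈ R, ∑ _c ∈ R.erase a, f R := by
        refine Finset.sum_congr rfl fun a ha => Finset.sum_congr rfl fun c hc => ?_
        rw [pair_eq hR2 ha hc]
    _ = ∑ a ∈ R, f R := by
        refine Finset.sum_congr rfl fun a ha => ?_
        rw [Finset.sum_const, Finset.card_erase_of_mem ha, hR2, one_nsmul]
    _ = f R + f R := by rw [Finset.sum_const, hR2, two_nsmul]

end helpers
abbrev Amb (d n : ℕ) : Type := (Fin d → Fin n) →₀ ℂ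

/-- The `i`-th cell `T^i` of a function `T : Fin d → Fin n`. -/
def cell {d n : ℕ} (T : Fin d → Fin n) (i : Fin n) : Finset (Fin d) :=
  Finset.univ.filter fun x => T x = i

/-- `T` is a `λ`-tabloid: the `i`-th cell has `λ i` elements. -/
def IsTabloid {d n : ℕ} (lam : Fin n → ℕ) (T : Fin d → Fin n) : Prop :=
  ∀ i, (cell T i).card = lam i

/-- The permutation module `M^λ`: the span of the `λ`-tabloids inside the ambient module. -/
noncomputable def Mmod (d n : ℕ) (lam : Fin n → ℕ) : Submodule ℂ (Amb d n) :=
  Submodule.span ℂ {v | ∃ T, IsTabloid lam T ∧ v = Finsupp.single T 1}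

/-- `c_{i,R} T`: move every element of `R` into the `i`-th cell. -/
def cmod {d n : ℕ} (i : Fin n) (R : Finset (Fin d)) (T : Fin d → Fin n) : Fin d → Fin n :=
  fun x => if x ∈ R then i else T x

/-- The divided power `E_i^{(r)}`, defined on tabloids by
`E_i^{(r)} T = ∑_{R ⊆ T^{i+1}, |R| = r} c_{i,R} T`. -/
noncomputable def Emap (d n : ℕ) (i : ℕ) (h : i + 1 < n) (r : ℕ) : Amb d n →ₗ[ℂ] Amb d n :=
  Finsupp.lift (Amb d n) ℂ (Fin d → Fin n) fun T =>
    ∑ R ∈ (cell T ⟨i + 1, h⟩).powersetCard r,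
      Finsupp.single (cmod ⟨i, Nat.lt_of_succ_lt h⟩ R T) 1

/-- The divided power `F_i^{(r)}`, defined on tabloids by
`F_i^{(r)} T = ∑_{R ⊆ T^{i}, |R| = r} c_{i+1,R} T`. -/
noncomputable def Fmap (d n : ℕ) (i : ℕ) (h : i + 1 < n) (r : ℕ) : Amb d n →ₗ[ℂ] Amb d n :=
  Finsupp.lift (Amb d n) ℂ (Fin d → Fin n) fun T =>
    ∑ R ∈ (cell T ⟨i, Nat.lt_of_succ_lt h⟩).powersetCard r,
      Finsupp.single (cmod ⟨i + 1, h⟩ R T) 1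


section cellcmod
variable {d n : ℕ}

lemma cell_cmod_self (q : Fin n) (R : Finset (Fin d)) (T : Fin d → Fin n) :
    cell (cmod q R T) q = cell T q ∪ R := by
  ext x
  simp only [cell, cmod, Finset.mem_filter, Finset.mem_union, Finset.mem_univ, true_and]
  by_cases hx : x ∈ R <;> simp [hx]

lemma cell_cmod_ne {q w : Fin n} (h : w ≠ q) (R : Finset (Fin d)) (T : Fin d → Fin n) :
    cell (cmod q R T) w = cell T w \ R := by
  ext x
  simp only [cell, Finset.mem_filter, Finset.mem_sdiff, Finset.mem_univ, true_and]
  by_cases hx : x ∈ R <;> simp [hx, h.symm, cmod]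

lemma cell_disjoint {p r : Fin n} (h : p ≠ r) (T : Fin d → Fin n) :
    Disjoint (cell T p) (cell T r) := by
  rw [Finset.disjoint_left]
  intro x hx hx'
  simp only [cell, Finset.mem_filter] at hx hx'
  exact h (hx.2 ▸ hx'.2 ▸ rfl)

lemma mem_cell {T : Fin d → Fin n} {p : Fin n} {x : Fin d} : x ∈ cell T p ↔ T x = p := by
  simp [cell]

/-- generic map moving `r` elements from cell `p` to cell `q`. -/
noncomputable def Gmap (d n : ℕ) (p q : Fin n) (r : ℕ) : Amb d n →ₗ[ℂ] Amb d n :=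
  Finsupp.lift (Amb d n) ℂ (Fin d → Fin n) fun T =>
    ∑ R ∈ (cell T p).powersetCard r, Finsupp.single (cmod q R T) 1

lemma Gmap_single (p q : Fin n) (r : ℕ) (T : Fin d → Fin n) :
    Gmap d n p q r (Finsupp.single T 1) =
      ∑ R ∈ (cell T p).powersetCard r, Finsupp.single (cmod q R T) 1 := by
  simp [Gmap, Finsupp.lift_apply, Finsupp.sum_single_index]

lemma Emap_eq_Gmap (i : ℕ) (h : i + 1 < n) (r : ℕ) :
    Emap d n i h r = Gmap d n ⟨i + 1, h⟩ ⟨i, Nat.lt_of_succ_lt h⟩ r := rfl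

lemma Fmap_eq_Gmap (i : ℕ) (h : i + 1 < n) (r : ℕ) :
    Fmap d n i h r = Gmap d n ⟨i, Nat.lt_of_succ_lt h⟩ ⟨i + 1, h⟩ r := rfl

end cellcmod

section cmodfun
variable {d n : ℕ} (T : Fin d → Fin n)

lemma cmod_comm {q p : Fin n} {R : Finset (Fin d)} {b : Fin d} (hb : b ∉ R) :
    cmod q R (cmod p {b} T) = cmod p {b} (cmod q R T) := by
  funext x
  simp only [cmod, Finset.mem_singleton]
  split_ifs <;> first | rfl | (subst_vars; tauto)

lemma cmod_i (q p : Fin n) (a b : Fin d) :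
    cmod q {b} (cmod p {b} (cmod q {a} T)) = cmod q {a, b} T := by
  funext x
  simp only [cmod, Finset.mem_singleton, Finset.mem_insert]
  split_ifs <;> first | rfl | (subst_vars; tauto)

lemma cmod_ii (w v : Fin n) {a b c : Fin d} (hba : b ≠ a) (hbc : b ≠ c) :
    cmod w {c} (cmod v {b} (cmod w {a} T)) = cmod v {b} (cmod w {a, c} T) := by
  funext x
  simp only [cmod, Finset.mem_singleton, Finset.mem_insert]
  split_ifs <;> first | rfl | (subst_vars; tauto)

lemma cmod_iii (q p : Fin n) (a b : Fin d) :
    cmod q {b, a} (cmod p {b} T) = cmod q {a, b} T := by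
  funext x
  simp only [cmod, Finset.mem_singleton, Finset.mem_insert]
  split_ifs <;> first | rfl | (subst_vars; tauto)

lemma cmod_v (r q : Fin n) (a : Fin d) :
    cmod r {a} (cmod q {a} T) = cmod r {a} T := by
  funext x
  simp only [cmod, Finset.mem_singleton]
  split_ifs <;> rfl

lemma cmod_vii (q r : Fin n) {a c : Fin d} (hac : a ≠ c) :
    cmod q {c} (cmod r {a} T) = cmod r {a} (cmod q {a, c} T) := by
  funext x
  simp only [cmod, Finset.mem_singleton, Finset.mem_insert]
  split_ifs <;> first | rfl | (subst_vars; tauto)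

end cmodfun

set_option maxHeartbeats 1000000

section patterns
variable {d n : ℕ}

lemma pattern1_single (p q r : Fin n) (hpq : p ≠ q) (hpr : p ≠ r) (hqr : q ≠ r)
    (T : Fin d → Fin n) :
    Gmap d n p q 1 (Gmap d n r p 1 (Gmap d n p q 1 (Finsupp.single T 1))) =
      Gmap d n p q 2 (Gmap d n r p 1 (Finsupp.single T 1)) +
        Gmap d n r p 1 (Gmap d n p q 2 (Finsupp.single T 1)) := by
  have hXY : Disjoint (cell T p) (cell T r) := cell_disjoint hpr T
  have hL : Gmap d n p q 1 (Gmap d n r p 1 (Gmap d n p q 1 (Finsupp.single T 1))) =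
      ∑ a ∈ cell T p, ∑ b ∈ cell T r,
        (Finsupp.single (cmod q {a, b} T) 1 +
          ∑ c ∈ (cell T p).erase a, Finsupp.single (cmod p {b} (cmod q {a, c} T)) 1) := by
    rw [Gmap_single, sum_pc1, map_sum, map_sum]
    refine Finset.sum_congr rfl fun a ha => ?_
    have haY : a ∉ cell T r := Finset.disjoint_left.mp hXY ha
    have hYa : cell (cmod q {a} T) r = cell T r := by
      rw [cell_cmod_ne hqr.symm, Finset.sdiff_singleton_eq_erase,
        Finset.erase_eq_of_notMem haY]
    rw [Gmap_single, hYa, sum_pc1, map_sum]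
    refine Finset.sum_congr rfl fun b hb => ?_
    have hbX : b ∉ cell T p := Finset.disjoint_right.mp hXY hb
    have hba : b ≠ a := fun h => hbX (h ▸ ha)
    have hcell : cell (cmod p {b} (cmod q {a} T)) p = insert b ((cell T p).erase a) := by
      rw [cell_cmod_self, cell_cmod_ne hpq, Finset.sdiff_singleton_eq_erase,
        Finset.union_comm, ← Finset.insert_eq]
    rw [Gmap_single, hcell, sum_pc1, Finset.sum_insert (by simp [hbX])]
    congr 1
    · rw [cmod_i]
    · refine Finset.sum_congr rfl fun c hc => ?_
      have hbc : b ≠ c := fun h => hbX (h ▸ Finset.mem_of_mem_erase hc)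
      rw [cmod_ii T q p hba hbc]
  have hR1 : Gmap d n p q 2 (Gmap d n r p 1 (Finsupp.single T 1)) =
      ∑ b ∈ cell T r,
        (∑ R ∈ (cell T p).powersetCard 2, Finsupp.single (cmod p {b} (cmod q R T)) 1 +
          ∑ a ∈ cell T p, Finsupp.single (cmod q {a, b} T) 1) := by
    rw [Gmap_single, sum_pc1, map_sum]
    refine Finset.sum_congr rfl fun b hb => ?_
    have hbX : b ∉ cell T p := Finset.disjoint_right.mp hXY hb
    have hcell : cell (cmod p {b} T) p = insert b (cell T p) := by
      rw [cell_cmod_self, Finset.union_comm, ← Finset.insert_eq]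
    have hdisj : Disjoint ((cell T p).powersetCard 2)
        (((cell T p).powersetCard 1).image (insert b)) := by
      rw [Finset.disjoint_left]
      intro R hR hR'
      obtain ⟨S, hS, rfl⟩ := Finset.mem_image.mp hR'
      exact hbX ((Finset.mem_powersetCard.mp hR).1 (Finset.mem_insert_self b S))
    have hinj : ∀ S ∈ (cell T p).powersetCard 1, ∀ S' ∈ (cell T p).powersetCard 1,
        insert b S = insert b S' → S = S' := by
      intro S hS S' hS' hE
      have h1 : b ∉ S := fun hc => hbX ((Finset.mem_powersetCard.mp hS).1 hc)
      have h2 : b ∉ S' := fun hc => hbX ((Finset.mem_powersetCard.mp hS').1 hc)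
      rw [← Finset.erase_insert h1, ← Finset.erase_insert h2, hE]
    rw [Gmap_single, hcell, show (2 : ℕ) = 1 + 1 from rfl,
      Finset.powersetCard_succ_insert hbX, Finset.sum_union hdisj,
      Finset.sum_image hinj, sum_pc1]
    congr 1
    · refine Finset.sum_congr rfl fun R hR => ?_
      have hbR : b ∉ R := fun hc => hbX ((Finset.mem_powersetCard.mp hR).1 hc)
      rw [cmod_comm T hbR]
    · refine Finset.sum_congr rfl fun a ha => ?_
      rw [cmod_iii]
  have hR2 : Gmap d n r p 1 (Gmap d n p q 2 (Finsupp.single T 1)) =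
      ∑ R ∈ (cell T p).powersetCard 2, ∑ b ∈ cell T r,
        Finsupp.single (cmod p {b} (cmod q R T)) 1 := by
    rw [Gmap_single, map_sum]
    refine Finset.sum_congr rfl fun R hR => ?_
    have hRX : R ⊆ cell T p := (Finset.mem_powersetCard.mp hR).1
    have hYR : cell (cmod q R T) r = cell T r := by
      rw [cell_cmod_ne hqr.symm, Finset.sdiff_eq_self_of_disjoint
        (hXY.symm.mono_right hRX)]
    rw [Gmap_single, hYR, sum_pc1]
  rw [hL, hR1, hR2]
  simp only [Finset.sum_add_distrib]
  have e1 : ∑ a ∈ cell T p, ∑ b ∈ cell T r, Finsupp.single (cmod q {a, b} T) (1 : ℂ) =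
      ∑ b ∈ cell T r, ∑ a ∈ cell T p, Finsupp.single (cmod q {a, b} T) 1 :=
    Finset.sum_comm
  have e2 : ∑ a ∈ cell T p, ∑ b ∈ cell T r, ∑ c ∈ (cell T p).erase a,
        Finsupp.single (cmod p {b} (cmod q {a, c} T)) (1 : ℂ) =
      ∑ b ∈ cell T r, (∑ R ∈ (cell T p).powersetCard 2,
        (Finsupp.single (cmod p {b} (cmod q R T)) 1 +
          Finsupp.single (cmod p {b} (cmod q R T)) 1)) := by
    rw [Finset.sum_comm]
    exact Finset.sum_congr rfl fun b _ => pair_sum'' (cell T p) (fun R => Finsupp.single (cmod p {b} (cmod q R T)) (1:ℂ))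
  rw [e1, e2]
  simp only [Finset.sum_add_distrib]
  rw [Finset.sum_comm (s := (cell T p).powersetCard 2) (t := cell T r)]
  abel

lemma pattern2_single (p q r : Fin n) (hpq : p ≠ q) (hpr : p ≠ r) (hqr : q ≠ r)
    (T : Fin d → Fin n) :
    Gmap d n p q 1 (Gmap d n q r 1 (Gmap d n p q 1 (Finsupp.single T 1))) =
      Gmap d n p q 2 (Gmap d n q r 1 (Finsupp.single T 1)) +
        Gmap d n q r 1 (Gmap d n p q 2 (Finsupp.single T 1)) := by
  have hXZ : Disjoint (cell T p) (cell T q) := cell_disjoint hpq T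
  have hL : Gmap d n p q 1 (Gmap d n q r 1 (Gmap d n p q 1 (Finsupp.single T 1))) =
      ∑ a ∈ cell T p,
        (∑ c ∈ (cell T p).erase a, Finsupp.single (cmod q {c} (cmod r {a} T)) 1 +
          ∑ b ∈ cell T q, ∑ c ∈ (cell T p).erase a,
            Finsupp.single (cmod r {b} (cmod q {a, c} T)) 1) := by
    rw [Gmap_single, sum_pc1, map_sum, map_sum]
    refine Finset.sum_congr rfl fun a ha => ?_
    have haZ : a ∉ cell T q := Finset.disjoint_left.mp hXZ ha
    have hZa : cell (cmod q {a} T) q = insert a (cell T q) := by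
      rw [cell_cmod_self, Finset.union_comm, ← Finset.insert_eq]
    rw [Gmap_single, hZa, sum_pc1, Finset.sum_insert haZ, map_add, map_sum]
    congr 1
    · rw [cmod_v]
      have hcell : cell (cmod r {a} T) p = (cell T p).erase a := by
        rw [cell_cmod_ne hpr, Finset.sdiff_singleton_eq_erase]
      rw [Gmap_single, hcell, sum_pc1]
    · refine Finset.sum_congr rfl fun b hb => ?_
      have hbX : b ∉ cell T p := Finset.disjoint_right.mp hXZ hb
      have hba : b ≠ a := fun h => hbX (h ▸ ha)
      have hcell : cell (cmod r {b} (cmod q {a} T)) p = (cell T p).erase a := by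
        rw [cell_cmod_ne hpr, cell_cmod_ne hpq, Finset.sdiff_singleton_eq_erase,
          Finset.sdiff_singleton_eq_erase, Finset.erase_eq_of_notMem (by simp [hbX])]
      rw [Gmap_single, hcell, sum_pc1]
      refine Finset.sum_congr rfl fun c hc => ?_
      have hbc : b ≠ c := fun h => hbX (h ▸ Finset.mem_of_mem_erase hc)
      rw [cmod_ii T q r hba hbc]
  have hR1 : Gmap d n p q 2 (Gmap d n q r 1 (Finsupp.single T 1)) =
      ∑ b ∈ cell T q, ∑ R ∈ (cell T p).powersetCard 2,
        Finsupp.single (cmod r {b} (cmod q R T)) 1 := by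
    rw [Gmap_single, sum_pc1, map_sum]
    refine Finset.sum_congr rfl fun b hb => ?_
    have hbX : b ∉ cell T p := Finset.disjoint_right.mp hXZ hb
    have hcell : cell (cmod r {b} T) p = cell T p := by
      rw [cell_cmod_ne hpr, Finset.sdiff_singleton_eq_erase,
        Finset.erase_eq_of_notMem hbX]
    rw [Gmap_single, hcell]
    refine Finset.sum_congr rfl fun R hR => ?_
    have hbR : b ∉ R := fun hc => hbX ((Finset.mem_powersetCard.mp hR).1 hc)
    rw [cmod_comm T hbR]
  have hR2 : Gmap d n q r 1 (Gmap d n p q 2 (Finsupp.single T 1)) =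
      ∑ R ∈ (cell T p).powersetCard 2,
        (∑ b ∈ cell T q, Finsupp.single (cmod r {b} (cmod q R T)) 1 +
          ∑ b ∈ R, Finsupp.single (cmod r {b} (cmod q R T)) 1) := by
    rw [Gmap_single, map_sum]
    refine Finset.sum_congr rfl fun R hR => ?_
    have hRX : R ⊆ cell T p := (Finset.mem_powersetCard.mp hR).1
    have hZR : Disjoint (cell T q) R := hXZ.symm.mono_right hRX
    have hcell : cell (cmod q R T) q = cell T q ∪ R := cell_cmod_self q R T
    rw [Gmap_single, hcell, sum_pc1, Finset.sum_union hZR]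
  rw [hL, hR1, hR2]
  simp only [Finset.sum_add_distrib]
  have e1 : ∑ a ∈ cell T p, ∑ c ∈ (cell T p).erase a,
        Finsupp.single (cmod q {c} (cmod r {a} T)) (1 : ℂ) =
      ∑ R ∈ (cell T p).powersetCard 2, ∑ b ∈ R,
        Finsupp.single (cmod r {b} (cmod q R T)) 1 := by
    have step1 : ∑ a ∈ cell T p, ∑ c ∈ (cell T p).erase a,
          Finsupp.single (cmod q {c} (cmod r {a} T)) (1 : ℂ) =
        ∑ a ∈ cell T p, ∑ c ∈ (cell T p).erase a,
          Finsupp.single (cmod r {a} (cmod q {a, c} T)) (1 : ℂ) := by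
      refine Finset.sum_congr rfl fun a ha => Finset.sum_congr rfl fun c hc => ?_
      have hac : a ≠ c := fun h => (Finset.ne_of_mem_erase hc) h.symm
      rw [cmod_vii T q r hac]
    rw [step1, pair_sum' (cell T p)
      (fun a c => Finsupp.single (cmod r {a} (cmod q {a, c} T)) (1:ℂ))]
    refine Finset.sum_congr rfl fun R hR => Finset.sum_congr rfl fun a ha => ?_
    have hR2c : R.card = 2 := (Finset.mem_powersetCard.mp hR).2
    have hone : ∑ c ∈ R.erase a, Finsupp.single (cmod r {a} (cmod q {a, c} T)) (1:ℂ) =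
        ∑ c ∈ R.erase a, Finsupp.single (cmod r {a} (cmod q R T)) (1:ℂ) := by
      refine Finset.sum_congr rfl fun c hc => ?_
      rw [pair_eq hR2c ha hc]
    rw [hone, Finset.sum_const, Finset.card_erase_of_mem ha, hR2c, one_nsmul]
  have e2 : ∑ a ∈ cell T p, ∑ b ∈ cell T q, ∑ c ∈ (cell T p).erase a,
        Finsupp.single (cmod r {b} (cmod q {a, c} T)) (1 : ℂ) =
      ∑ b ∈ cell T q, ∑ R ∈ (cell T p).powersetCard 2,
        (Finsupp.single (cmod r {b} (cmod q R T)) (1:ℂ) +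
          Finsupp.single (cmod r {b} (cmod q R T)) (1:ℂ)) := by
    rw [Finset.sum_comm]
    exact Finset.sum_congr rfl fun b _ => pair_sum'' (cell T p)
      (fun R => Finsupp.single (cmod r {b} (cmod q R T)) (1:ℂ))
  rw [e1, e2]
  simp only [Finset.sum_add_distrib]
  rw [Finset.sum_comm (s := (cell T p).powersetCard 2) (t := cell T q)]
  abel

lemma pattern1 (p q r : Fin n) (hpq : p ≠ q) (hpr : p ≠ r) (hqr : q ≠ r) (v : Amb d n) :
    Gmap d n p q 1 (Gmap d n r p 1 (Gmap d n p q 1 v)) =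
      Gmap d n p q 2 (Gmap d n r p 1 v) + Gmap d n r p 1 (Gmap d n p q 2 v) := by
  induction v using Finsupp.induction_linear with
  | zero => simp
  | add f g hf hg => simp only [map_add, hf, hg]; abel
  | single T c =>
    have h1 : (Finsupp.single T c : Amb d n) = c • Finsupp.single T 1 := by
      rw [Finsupp.smul_single, smul_eq_mul, mul_one]
    rw [h1]
    simp only [map_smul, pattern1_single p q r hpq hpr hqr T, smul_add]

lemma pattern2 (p q r : Fin n) (hpq : p ≠ q) (hpr : p ≠ r) (hqr : q ≠ r) (v : Amb d n) :
    Gmap d n p q 1 (Gmap d n q r 1 (Gmap d n p q 1 v)) =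
      Gmap d n p q 2 (Gmap d n q r 1 v) + Gmap d n q r 1 (Gmap d n p q 2 v) := by
  induction v using Finsupp.induction_linear with
  | zero => simp
  | add f g hf hg => simp only [map_add, hf, hg]; abel
  | single T c =>
    have h1 : (Finsupp.single T c : Amb d n) = c • Finsupp.single T 1 := by
      rw [Finsupp.smul_single, smul_eq_mul, mul_one]
    rw [h1]
    simp only [map_smul, pattern2_single p q r hpq hpr hqr T, smul_add]

end patterns

/-- the Serre-type relation for adjacent indices `|i−j| = 1`:
`E_i ∘ E_j ∘ E_i = E_i^{(2)} ∘ E_j + E_j ∘ E_i^{(2)}` as linear maps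
`M^λ → M^{λ+2α_i+α_j}`, and likewise with `F` in place of `E`. -/
theorem stmt10 (d n : ℕ) (lam : Fin n → ℕ) (hlam : ∑ i, lam i = d)
    (i j : ℕ) (hi : i + 1 < n) (hj : j + 1 < n) (hadj : i + 1 = j ∨ j + 1 = i) :
    ∀ v ∈ Mmod d n lam,
      Emap d n i hi 1 (Emap d n j hj 1 (Emap d n i hi 1 v)) =
          Emap d n i hi 2 (Emap d n j hj 1 v) + Emap d n j hj 1 (Emap d n i hi 2 v) ∧
      Fmap d n i hi 1 (Fmap d n j hj 1 (Fmap d n i hi 1 v)) =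
          Fmap d n i hi 2 (Fmap d n j hj 1 v) + Fmap d n j hj 1 (Fmap d n i hi 2 v) := by
  intro v _
  constructor
  · rcases hadj with h | h
    · subst h
      simp only [Emap_eq_Gmap]
      exact pattern1 ⟨i + 1, hi⟩ ⟨i, by omega⟩ ⟨i + 1 + 1, hj⟩
        ((by simp [Fin.ext_iff]; try omega)) ((by simp [Fin.ext_iff]; try omega))
        ((by simp [Fin.ext_iff]; try omega)) v
    · subst h
      simp only [Emap_eq_Gmap]
      exact pattern2 ⟨j + 1 + 1, hi⟩ ⟨j + 1, by omega⟩ ⟨j, by omega⟩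
        ((by simp [Fin.ext_iff]; try omega)) ((by simp [Fin.ext_iff]; try omega))
        ((by simp [Fin.ext_iff]; try omega)) v
  · rcases hadj with h | h
    · subst h
      simp only [Fmap_eq_Gmap]
      exact pattern2 ⟨i, by omega⟩ ⟨i + 1, hi⟩ ⟨i + 1 + 1, hj⟩
        ((by simp [Fin.ext_iff]; try omega)) ((by simp [Fin.ext_iff]; try omega))
        ((by simp [Fin.ext_iff]; try omega)) v
    · subst h
      simp only [Fmap_eq_Gmap]
      exact pattern1 ⟨j + 1, by omega⟩ ⟨j + 1 + 1, hi⟩ ⟨j, by omega⟩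
        ((by simp [Fin.ext_iff]; try omega)) ((by simp [Fin.ext_iff]; try omega))
        ((by simp [Fin.ext_iff]; try omega)) v
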